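/- Suppose Y ⊆ ℝ^d is a separated net, λ > 0, and there exist C > 0 and δ > 0 such that for every axis-parallel cube Q of side length T ≥ 1, | #(Y ∩ Q) − λ|Q| | ≤ C T^{d−1−δ}. Then for every finite union of unit cubes 𝒞 that can be written as a disjoint-union/set-difference combination of dyadic cubes Q₁,...,Q_n with at most κ |∂𝒞|_{d−1} / 2^{j(d−1)} cubes of side length 2^j for each j ≥ 0, the discrepancy satisfies | #(Y ∩ 𝒞) − λ|𝒞| | ≤ (Cκ/(1 − 2^{−δ})) |∂𝒞|_{d−1}. -/

import Mathlib

open MeasureTheory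

/-- Half-open axis-parallel cube with corner `a` and side `T`. -/
def cube {d : ℕ} (a : Fin d → ℝ) (T : ℝ) : Set (EuclideanSpace ℝ (Fin d)) :=
  {x | ∀ i, a i ≤ x i ∧ x i < a i + T}

/-- Dyadic cube of side `2^j` with corner coordinates the integer multiples `a i * 2^j`. -/
def dyadicCube {d : ℕ} (j : ℕ) (a : Fin d → ℤ) : Set (EuclideanSpace ℝ (Fin d)) :=
  cube (fun i => (a i : ℝ) * 2 ^ j) (2 ^ j)

/-- `SComb Q A s` : the set `A` is built from the sets `Q i`, `i ∈ s`, using disjoint unions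
and set differences, each `Q i` being used at most once. -/
inductive SComb {α : Type*} {n : ℕ} (Q : Fin n → Set α) : Set α → Finset (Fin n) → Prop
  | base (i : Fin n) : SComb Q (Q i) {i}
  | union {A B : Set α} {s t : Finset (Fin n)} : SComb Q A s → SComb Q B t →
      Disjoint s t → Disjoint A B → SComb Q (A ∪ B) (s ∪ t)
  | sdiff {A B : Set α} {s t : Finset (Fin n)} : SComb Q A s → SComb Q B t →
      Disjoint s t → B ⊆ A → SComb Q (A \ B) (s ∪ t)

/-- `Y` is a separated net in `ℝ^d`. -/
def IsSeparatedNet {d : ℕ} (Y : Set (EuclideanSpace ℝ (Fin d))) : Prop :=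
  ∃ r R : ℝ, 0 < r ∧ r < R ∧
    (∀ x ∈ Y, ∀ y ∈ Y, x ≠ y → r ≤ dist x y) ∧
    (∀ x : EuclideanSpace ℝ (Fin d), ∃ y ∈ Y, dist x y ≤ R)

open Bornology

lemma cube_eq_preimage {d : ℕ} (a : Fin d → ℝ) (T : ℝ) :
    cube a T = (MeasurableEquiv.toLp 2 (Fin d → ℝ)).symm ⁻¹'
      (Set.univ.pi fun i => Set.Ico (a i) (a i + T)) := by
  ext x; simp [cube, Set.mem_pi, Set.mem_Ico]

lemma cube_measurable {d : ℕ} (a : Fin d → ℝ) (T : ℝ) : MeasurableSet (cube a T) := by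
  rw [cube_eq_preimage]
  exact (MeasurableEquiv.toLp 2 (Fin d → ℝ)).symm.measurable
    (MeasurableSet.univ_pi fun i => measurableSet_Ico)

lemma cube_volume {d : ℕ} (a : Fin d → ℝ) {T : ℝ} (hT : 0 ≤ T) :
    (volume (cube a T)).toReal = T ^ d := by
  rw [cube_eq_preimage,
    (EuclideanSpace.volume_preserving_symm_measurableEquiv_toLp (Fin d)).measure_preimage
      ((MeasurableSet.univ_pi fun i => measurableSet_Ico).nullMeasurableSet),
    volume_pi_pi]
  simp [Real.volume_Ico, ENNReal.toReal_pow, ENNReal.toReal_ofReal hT]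

lemma cube_bounded {d : ℕ} (a : Fin d → ℝ) (T : ℝ) : IsBounded (cube a T) := by
  have h : cube a T ⊆ (WithLp.equiv 2 (Fin d → ℝ)) ⁻¹' (Set.Icc a (fun i => a i + T)) := by
    intro x hx
    simp only [Set.mem_preimage, Set.mem_Icc, Pi.le_def]
    exact ⟨fun i => (hx i).1, fun i => (hx i).2.le⟩
  exact ((PiLp.antilipschitzWith_ofLp 2 _).isBounded_preimage
    (Metric.isBounded_Icc _ _)).subset h

lemma sep_inter_finite {d : ℕ} {Y : Set (EuclideanSpace ℝ (Fin d))} {r : ℝ}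
    (hr : 0 < r) (hsep : ∀ x ∈ Y, ∀ y ∈ Y, x ≠ y → r ≤ dist x y)
    {B : Set (EuclideanSpace ℝ (Fin d))} (hB : IsBounded B) : (Y ∩ B).Finite := by
  by_contra hinf
  rw [← Set.not_infinite, not_not] at hinf
  obtain ⟨ρ, hsub⟩ := (hB.subset Set.inter_subset_right :
    IsBounded (Y ∩ B)).subset_closedBall (0 : EuclideanSpace ℝ (Fin d))
  obtain ⟨x, -, hx⟩ := hinf.exists_accPt_of_subset_isCompact
    (ProperSpace.isCompact_closedBall 0 ρ) hsub
  rw [accPt_iff_nhds] at hx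
  obtain ⟨y₁, hy₁, hy₁x⟩ := hx (Metric.ball x (r / 2)) (Metric.ball_mem_nhds x (by linarith))
  obtain ⟨y₂, hy₂, hy₂x⟩ := hx (Metric.ball x (min (r / 2) (dist y₁ x)))
    (Metric.ball_mem_nhds x (lt_min (by linarith)
      (dist_pos.2 hy₁x)))
  have h12 : y₂ ≠ y₁ := by
    intro h
    rw [h] at hy₂
    exact absurd (Metric.mem_ball.1 hy₂.1) (not_lt.2 (min_le_right _ _))
  have := hsep y₂ hy₂.2.1 y₁ hy₁.2.1 h12
  have d1 : dist y₁ x < r / 2 := Metric.mem_ball.1 hy₁.1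
  have d2 : dist y₂ x < r / 2 := lt_of_lt_of_le (Metric.mem_ball.1 hy₂.1) (min_le_left _ _)
  have : dist y₂ y₁ ≤ dist y₂ x + dist x y₁ := dist_triangle _ _ _
  rw [dist_comm x y₁] at this
  linarith

open Bornology in
lemma scomb_bound {d n : ℕ} {Q : Fin n → Set (EuclideanSpace ℝ (Fin d))}
    {Y : Set (EuclideanSpace ℝ (Fin d))} {r : ℝ} (lam : ℝ) (hr : 0 < r)
    (hsep : ∀ x ∈ Y, ∀ y ∈ Y, x ≠ y → r ≤ dist x y)
    (hQm : ∀ i, MeasurableSet (Q i)) (hQb : ∀ i, IsBounded (Q i))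
    {A : Set (EuclideanSpace ℝ (Fin d))} {s : Finset (Fin n)} (h : SComb Q A s) :
    MeasurableSet A ∧ IsBounded A ∧
      |((Y ∩ A).ncard : ℝ) - lam * (volume A).toReal| ≤
        ∑ i ∈ s, |((Y ∩ Q i).ncard : ℝ) - lam * (volume (Q i)).toReal| := by
  induction h with
  | base i => exact ⟨hQm i, hQb i, by simp⟩
  | @union A B s t hA hB hst hAB ihA ihB =>
    obtain ⟨hAm, hAb, ihA⟩ := ihA
    obtain ⟨hBm, hBb, ihB⟩ := ihB
    refine ⟨hAm.union hBm, hAb.union hBb, ?_⟩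
    have hfA := sep_inter_finite hr hsep hAb
    have hfB := sep_inter_finite hr hsep hBb
    have hcard : ((Y ∩ (A ∪ B)).ncard : ℝ) = (Y ∩ A).ncard + (Y ∩ B).ncard := by
      rw [Set.inter_union_distrib_left,
        Set.ncard_union_eq (hAB.mono Set.inter_subset_right Set.inter_subset_right) hfA hfB]
      push_cast; ring
    have hvol : (volume (A ∪ B)).toReal = (volume A).toReal + (volume B).toReal := by
      rw [measure_union hAB hBm, ENNReal.toReal_add
        (hAb.measure_lt_top).ne (hBb.measure_lt_top).ne]
    rw [Finset.sum_union hst, hcard, hvol]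
    calc |((Y ∩ A).ncard + (Y ∩ B).ncard : ℝ) - lam * ((volume A).toReal + (volume B).toReal)|
        ≤ |((Y ∩ A).ncard : ℝ) - lam * (volume A).toReal| +
          |((Y ∩ B).ncard : ℝ) - lam * (volume B).toReal| := by
          rw [show ((Y ∩ A).ncard + (Y ∩ B).ncard : ℝ) -
            lam * ((volume A).toReal + (volume B).toReal) =
            (((Y ∩ A).ncard : ℝ) - lam * (volume A).toReal) +
            (((Y ∩ B).ncard : ℝ) - lam * (volume B).toReal) by ring]
          exact abs_add_le _ _
      _ ≤ _ := add_le_add ihA ihB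
  | @sdiff A B s t hA hB hst hBA ihA ihB =>
    obtain ⟨hAm, hAb, ihA⟩ := ihA
    obtain ⟨hBm, hBb, ihB⟩ := ihB
    refine ⟨hAm.diff hBm, hAb.subset Set.diff_subset, ?_⟩
    have hfA := sep_inter_finite hr hsep hAb
    have hsub : Y ∩ B ⊆ Y ∩ A := Set.inter_subset_inter_right _ hBA
    have heq : Y ∩ (A \ B) = (Y ∩ A) \ (Y ∩ B) := by
      ext x
      simp only [Set.mem_inter_iff, Set.mem_diff]
      tauto
    have hcard : ((Y ∩ (A \ B)).ncard : ℝ) = (Y ∩ A).ncard - (Y ∩ B).ncard := by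
      rw [heq, Set.ncard_diff hsub (hfA.subset hsub), Nat.cast_sub (Set.ncard_le_ncard hsub hfA)]
    have hvol : (volume (A \ B)).toReal = (volume A).toReal - (volume B).toReal := by
      rw [measure_diff hBA hBm.nullMeasurableSet (hBb.measure_lt_top).ne,
        ENNReal.toReal_sub_of_le (measure_mono hBA) (hAb.measure_lt_top).ne]
    rw [Finset.sum_union hst, hcard, hvol]
    calc |(((Y ∩ A).ncard : ℝ) - (Y ∩ B).ncard) - lam * ((volume A).toReal - (volume B).toReal)|
        ≤ |((Y ∩ A).ncard : ℝ) - lam * (volume A).toReal| +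
          |((Y ∩ B).ncard : ℝ) - lam * (volume B).toReal| := by
          rw [show (((Y ∩ A).ncard : ℝ) - (Y ∩ B).ncard) -
            lam * ((volume A).toReal - (volume B).toReal) =
            (((Y ∩ A).ncard : ℝ) - lam * (volume A).toReal) -
            (((Y ∩ B).ncard : ℝ) - lam * (volume B).toReal) by ring]
          exact abs_sub _ _
      _ ≤ _ := add_le_add ihA ihB

/-- Quantitative cube discrepancy bounds plus Laczkovich's decomposition of a finite union of
unit cubes into dyadic cubes give a discrepancy bound linear in the boundary measure. -/
theorem discrepancy_of_union_unit_cubes (d : ℕ) (hd : 1 ≤ d)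
    (Y : Set (EuclideanSpace ℝ (Fin d))) (hY : IsSeparatedNet Y)
    (lam C δ κ : ℝ) (hlam : 0 < lam) (hC : 0 < C) (hδ : 0 < δ) (hδd : δ ≤ d) (hκ : 0 < κ)
    (hcube : ∀ (a : Fin d → ℝ) (T : ℝ), 1 ≤ T →
      |(Nat.card (Y ∩ cube a T : Set _) : ℝ) - lam * T ^ d| ≤ C * T ^ ((d : ℝ) - 1 - δ))
    (𝒞 : Set (EuclideanSpace ℝ (Fin d))) (S : Finset (Fin d → ℤ))
    (h𝒞 : 𝒞 = ⋃ a ∈ S, cube (fun i => (a i : ℝ)) 1)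
    (n : ℕ) (j : Fin n → ℕ) (a : Fin n → Fin d → ℤ)
    (hcomb : ∃ s : Finset (Fin n), SComb (fun i => dyadicCube (j i) (a i)) 𝒞 s)
    (hcount : ∀ jj : ℕ,
      (((Finset.univ : Finset (Fin n)).filter (fun i => j i = jj)).card : ℝ) ≤
        κ * (μH[(d : ℝ) - 1] (frontier 𝒞)).toReal / 2 ^ (jj * (d - 1))) :
    |(Nat.card (Y ∩ 𝒞 : Set _) : ℝ) - lam * (volume 𝒞).toReal| ≤
      (C * κ / (1 - (2 : ℝ) ^ (-δ))) * (μH[(d : ℝ) - 1] (frontier 𝒞)).toReal := by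
  classical
  obtain ⟨r, R, hr, -, hsep, -⟩ := hY
  obtain ⟨s, hc⟩ := hcomb
  set M : ℝ := (μH[(d : ℝ) - 1] (frontier 𝒞)).toReal with hM
  have hM0 : 0 ≤ M := ENNReal.toReal_nonneg
  set q : ℝ := (2 : ℝ) ^ (-δ) with hq
  have hq0 : 0 < q := Real.rpow_pos_of_pos two_pos _
  have hq1 : q < 1 := Real.rpow_lt_one_of_one_lt_of_neg one_lt_two (neg_neg_of_pos hδ)
  have h1q : 0 < 1 - q := by linarith
  -- properties of the dyadic cubes
  set Q : Fin n → Set (EuclideanSpace ℝ (Fin d)) := fun i => dyadicCube (j i) (a i) with hQ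
  have hQm : ∀ i, MeasurableSet (Q i) := fun i => cube_measurable _ _
  have hQb : ∀ i, IsBounded (Q i) := fun i => cube_bounded _ _
  -- discrepancy of each dyadic cube
  have hdisc : ∀ i : Fin n, |((Y ∩ Q i).ncard : ℝ) - lam * (volume (Q i)).toReal| ≤
      C * ((2 : ℝ) ^ (j i)) ^ ((d : ℝ) - 1 - δ) := by
    intro i
    have hT : (1 : ℝ) ≤ 2 ^ (j i) := one_le_pow₀ one_le_two
    have h := hcube (fun k => ((a i k : ℝ)) * 2 ^ (j i)) (2 ^ (j i)) hT
    rw [Nat.card_coe_set_eq] at h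
    have hv : (volume (Q i)).toReal = ((2 : ℝ) ^ (j i)) ^ d :=
      cube_volume _ (by positivity)
    rw [hQ]
    show |((Y ∩ cube (fun k => ((a i k : ℝ)) * 2 ^ (j i)) (2 ^ (j i))).ncard : ℝ) -
      lam * (volume (cube (fun k => ((a i k : ℝ)) * 2 ^ (j i)) (2 ^ (j i)))).toReal| ≤
      C * ((2 : ℝ) ^ (j i)) ^ ((d : ℝ) - 1 - δ)
    rw [cube_volume _ (by positivity : (0:ℝ) ≤ 2 ^ (j i))]
    exact h
  -- the exponent identity
  have key : ∀ jj : ℕ, ((2 : ℝ) ^ jj) ^ ((d : ℝ) - 1 - δ) =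
      (2 : ℝ) ^ (jj * (d - 1)) * q ^ jj := by
    intro jj
    rw [hq, ← Real.rpow_natCast (2 : ℝ) jj, ← Real.rpow_natCast ((2 : ℝ) ^ (-δ)) jj,
      ← Real.rpow_natCast (2 : ℝ) (jj * (d - 1)), ← Real.rpow_mul (by norm_num : (0:ℝ) ≤ 2),
      ← Real.rpow_mul (by norm_num : (0:ℝ) ≤ 2), ← Real.rpow_add two_pos]
    congr 1
    push_cast [Nat.cast_sub hd]
    ring
  -- nonnegativity of the bound for each cube
  have hf0 : ∀ i : Fin n, 0 ≤ C * ((2 : ℝ) ^ (j i)) ^ ((d : ℝ) - 1 - δ) := by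
    intro i; positivity
  -- main chain
  rw [Nat.card_coe_set_eq, hM]
  calc |((Y ∩ 𝒞).ncard : ℝ) - lam * (volume 𝒞).toReal|
      ≤ ∑ i ∈ s, |((Y ∩ Q i).ncard : ℝ) - lam * (volume (Q i)).toReal| :=
        (scomb_bound lam hr hsep hQm hQb hc).2.2
    _ ≤ ∑ i ∈ s, C * ((2 : ℝ) ^ (j i)) ^ ((d : ℝ) - 1 - δ) :=
        Finset.sum_le_sum fun i _ => hdisc i
    _ ≤ ∑ i : Fin n, C * ((2 : ℝ) ^ (j i)) ^ ((d : ℝ) - 1 - δ) :=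
        Finset.sum_le_sum_of_subset_of_nonneg (Finset.subset_univ s) fun i _ _ => hf0 i
    _ = ∑ jj ∈ Finset.range (Finset.univ.sup j + 1),
          ∑ i ∈ Finset.univ.filter (fun i => j i = jj),
            C * ((2 : ℝ) ^ (j i)) ^ ((d : ℝ) - 1 - δ) := by
        rw [Finset.sum_fiberwise_of_maps_to (fun i _ => Finset.mem_range.2
          (Nat.lt_succ_of_le (Finset.le_sup (Finset.mem_univ i))))]
    _ ≤ ∑ jj ∈ Finset.range (Finset.univ.sup j + 1), C * κ * M * q ^ jj := by
        apply Finset.sum_le_sum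
        intro jj _
        have hsum : ∑ i ∈ Finset.univ.filter (fun i => j i = jj),
            C * ((2 : ℝ) ^ (j i)) ^ ((d : ℝ) - 1 - δ) =
            ((Finset.univ.filter (fun i => j i = jj)).card : ℝ) *
              (C * ((2 : ℝ) ^ jj) ^ ((d : ℝ) - 1 - δ)) := by
          rw [Finset.sum_congr rfl (fun i hi => by
            rw [(Finset.mem_filter.1 hi).2]), Finset.sum_const, nsmul_eq_mul]
        rw [hsum]
        have hD : (0 : ℝ) < 2 ^ (jj * (d - 1)) := by positivity
        calc ((Finset.univ.filter (fun i => j i = jj)).card : ℝ) *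
              (C * ((2 : ℝ) ^ jj) ^ ((d : ℝ) - 1 - δ))
            ≤ (κ * M / 2 ^ (jj * (d - 1))) * (C * ((2 : ℝ) ^ jj) ^ ((d : ℝ) - 1 - δ)) :=
              mul_le_mul_of_nonneg_right (hcount jj) (by positivity)
          _ = C * κ * M * q ^ jj := by
              rw [key jj]
              field_simp
              try ring
    _ = C * κ * M * ∑ jj ∈ Finset.range (Finset.univ.sup j + 1), q ^ jj := by
        rw [Finset.mul_sum]
    _ ≤ C * κ * M * (1 - q)⁻¹ := by
        apply mul_le_mul_of_nonneg_left _ (by positivity)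
        calc ∑ jj ∈ Finset.range (Finset.univ.sup j + 1), q ^ jj
            ≤ ∑' jj : ℕ, q ^ jj := Summable.sum_le_tsum _ (fun i _ => by positivity)
              (summable_geometric_of_lt_one hq0.le hq1)
          _ = (1 - q)⁻¹ := tsum_geometric_of_lt_one hq0.le hq1
    _ = (C * κ / (1 - q)) * M := by ring
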